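/- Let S ⊆ ℕ^p be an affine semigroup whose minimal generating set is {s₁, …, s_t}, let i ∈ {1, …, t}, and let S′ be the submonoid of ℕ^p generated by {s₁, …, s_{i−1}, s_{i+1}, …, s_t, 2s_i, 3s_i} ∪ {s_i + s_j : j ∈ {1, …, t}, j ≠ i}. Then S′ = S \ {s_i}. -/

import Mathlib

/-- `S ⊆ ℕ^p` contains `0` and is closed under addition. -/
def IsSubmonoidSet {p : ℕ} (S : Set (Fin p → ℕ)) : Prop :=
  (0 : Fin p → ℕ) ∈ S ∧ ∀ x ∈ S, ∀ y ∈ S, x + y ∈ S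

/-- `s` is a minimal generator of `S`: it is a nonzero element of `S` that is not a
sum of two nonzero elements of `S`. -/
def IsMinGen {p : ℕ} (S : Set (Fin p → ℕ)) (s : Fin p → ℕ) : Prop :=
  s ∈ S ∧ s ≠ 0 ∧ ∀ a ∈ S, ∀ b ∈ S, a ≠ 0 → b ≠ 0 → a + b ≠ s

/-- The (unique) minimal generating set of `S`. -/
def minGens {p : ℕ} (S : Set (Fin p → ℕ)) : Set (Fin p → ℕ) :=
  {s | IsMinGen S s}

theorem stmt0 {p t : ℕ} (hp : 1 ≤ p) (S : Set (Fin p → ℕ))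
    (s : Fin t → (Fin p → ℕ)) (hinj : Function.Injective s)
    (hgen : S = (AddSubmonoid.closure (Set.range s) : Set (Fin p → ℕ)))
    (hmin : minGens S = Set.range s) (i : Fin t) :
    ((AddSubmonoid.closure
        ((Set.range s \ {s i} ∪ {(2 : ℕ) • s i, (3 : ℕ) • s i})
          ∪ {x | ∃ j : Fin t, j ≠ i ∧ x = s i + s j}) :
        AddSubmonoid (Fin p → ℕ)) : Set (Fin p → ℕ))
      = S \ {s i} := by
  set G : Set (Fin p → ℕ) :=
    (Set.range s \ {s i} ∪ {(2 : ℕ) • s i, (3 : ℕ) • s i})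
      ∪ {x | ∃ j : Fin t, j ≠ i ∧ x = s i + s j} with hG
  set C : AddSubmonoid (Fin p → ℕ) := AddSubmonoid.closure G with hC
  -- each s j is a minimal generator
  have hmg : ∀ j : Fin t, IsMinGen S (s j) := by
    intro j
    have : s j ∈ minGens S := hmin ▸ Set.mem_range_self j
    exact this
  have hSmem : ∀ j : Fin t, s j ∈ S := fun j => (hmg j).1
  have hSne : ∀ j : Fin t, s j ≠ 0 := fun j => (hmg j).2.1
  have hSmin := fun j => (hmg j).2.2
  have hS0 : (0 : Fin p → ℕ) ∈ S := by
    rw [hgen]; exact AddSubmonoid.zero_mem _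
  have hSadd : ∀ x ∈ S, ∀ y ∈ S, x + y ∈ S := by
    intro x hx y hy
    rw [hgen] at hx hy ⊢
    exact AddSubmonoid.add_mem _ hx hy
  -- generators of C: 2 • s i ∈ G, etc.
  have h2G : (2 : ℕ) • s i ∈ G := Or.inl (Or.inr (Or.inl rfl))
  have h3G : (3 : ℕ) • s i ∈ G := Or.inl (Or.inr (Or.inr rfl))
  have hjG : ∀ j : Fin t, j ≠ i → s j ∈ G := by
    intro j hj
    exact Or.inl (Or.inl ⟨Set.mem_range_self j, fun h => hj (hinj h)⟩)
  have hijG : ∀ j : Fin t, j ≠ i → s i + s j ∈ G := fun j hj => Or.inr ⟨j, hj, rfl⟩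
  -- key lemma: adding s i stays in C (unless the element is 0)
  have key : ∀ y ∈ C, y = 0 ∨ s i + y ∈ C := by
    intro y hy
    induction hy using AddSubmonoid.closure_induction with
    | mem g hg =>
      right
      rcases hg with (⟨hg1, hg2⟩ | hg | hg) | ⟨j, hj, rfl⟩
      · rcases hg1 with ⟨j, rfl⟩
        have : j ≠ i := fun h => hg2 (by rw [h]; rfl)
        exact AddSubmonoid.subset_closure (hijG j this)
      · subst hg
        have : s i + (2 : ℕ) • s i = (3 : ℕ) • s i := by
          rw [two_nsmul, succ_nsmul, two_nsmul]; abel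
        rw [this]
        exact AddSubmonoid.subset_closure h3G
      · rw [Set.mem_singleton_iff] at hg
        subst hg
        have : s i + (3 : ℕ) • s i = (2 : ℕ) • s i + (2 : ℕ) • s i := by
          rw [two_nsmul, succ_nsmul, two_nsmul]; abel
        rw [this]
        exact AddSubmonoid.add_mem _ (AddSubmonoid.subset_closure h2G)
          (AddSubmonoid.subset_closure h2G)
      · have : s i + (s i + s j) = (2 : ℕ) • s i + s j := by
          rw [two_nsmul]; abel
        rw [this]
        exact AddSubmonoid.add_mem _ (AddSubmonoid.subset_closure h2G)
          (AddSubmonoid.subset_closure (hjG j hj))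
    | zero => left; rfl
    | add a b ha hb iha ihb =>
      rcases iha with rfl | iha
      · rw [zero_add]; exact ihb
      · right
        rw [← add_assoc]
        exact AddSubmonoid.add_mem _ iha hb
  ext x
  constructor
  · -- closure G ⊆ S \ {s i}
    intro hx
    induction hx using AddSubmonoid.closure_induction with
    | mem g hg =>
      rcases hg with (⟨hg1, hg2⟩ | hg | hg) | ⟨j, hj, rfl⟩
      · rcases hg1 with ⟨j, rfl⟩
        exact ⟨hSmem j, hg2⟩
      · subst hg
        constructor
        · rw [two_nsmul]; exact hSadd _ (hSmem i) _ (hSmem i)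
        · intro h
          rw [Set.mem_singleton_iff, two_nsmul] at h
          exact hSmin i _ (hSmem i) _ (hSmem i) (hSne i) (hSne i) h
      · rw [Set.mem_singleton_iff] at hg; subst hg
        have h2S : (2 : ℕ) • s i ∈ S := by
          rw [two_nsmul]; exact hSadd _ (hSmem i) _ (hSmem i)
        have h2ne : (2 : ℕ) • s i ≠ 0 := by
          rw [two_nsmul]
          intro h
          apply hSne i
          funext k
          have := congrFun h k
          simp [Pi.add_apply] at this
          simp [this]
        constructor
        · have : (3 : ℕ) • s i = s i + (2 : ℕ) • s i := by
            rw [two_nsmul, succ_nsmul, two_nsmul]; abel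
          rw [this]; exact hSadd _ (hSmem i) _ h2S
        · intro h
          rw [Set.mem_singleton_iff] at h
          have h3 : s i + (2 : ℕ) • s i = s i := by
            have e : s i + (2 : ℕ) • s i = (3 : ℕ) • s i := by
              rw [two_nsmul, succ_nsmul, two_nsmul]; abel
            rw [e, h]
          exact hSmin i _ (hSmem i) _ h2S (hSne i) h2ne h3
      · constructor
        · exact hSadd _ (hSmem i) _ (hSmem j)
        · intro h
          rw [Set.mem_singleton_iff] at h
          exact hSmin i _ (hSmem i) _ (hSmem j) (hSne i) (hSne j) h
    | zero =>
      refine ⟨hS0, ?_⟩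
      intro h
      rw [Set.mem_singleton_iff] at h
      exact hSne i h.symm
    | add a b ha hb iha ihb =>
      refine ⟨hSadd _ iha.1 _ ihb.1, ?_⟩
      intro h
      rw [Set.mem_singleton_iff] at h
      rcases eq_or_ne a 0 with rfl | ha0
      · rw [zero_add] at h; exact ihb.2 h
      rcases eq_or_ne b 0 with rfl | hb0
      · rw [add_zero] at h; exact iha.2 h
      exact hSmin i _ iha.1 _ ihb.1 ha0 hb0 h
  · -- S \ {s i} ⊆ closure G
    rintro ⟨hxS, hxne⟩
    rw [Set.mem_singleton_iff] at hxne
    have hx : x ∈ AddSubmonoid.closure (Set.range s) := by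
      have := hxS; rw [hgen] at this; exact this
    have main : ∀ y, y ∈ AddSubmonoid.closure (Set.range s) → y ∈ C ∨ y = s i := by
      intro y hy
      induction hy using AddSubmonoid.closure_induction with
      | mem g hg =>
        rcases hg with ⟨j, rfl⟩
        by_cases hj : j = i
        · right; rw [hj]
        · left; exact AddSubmonoid.subset_closure (hjG j hj)
      | zero => left; exact AddSubmonoid.zero_mem _
      | add a b ha hb iha ihb =>
        rcases iha with iha | rfl
        · rcases ihb with ihb | rfl
          · left; exact AddSubmonoid.add_mem _ iha ihb
          · rcases key a iha with rfl | h
            · right; rw [zero_add]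
            · left; rw [add_comm]; exact h
        · rcases ihb with ihb | rfl
          · rcases key b ihb with rfl | h
            · right; rw [add_zero]
            · left; exact h
          · left
            have : s i + s i = (2 : ℕ) • s i := (two_nsmul _).symm
            rw [this]
            exact AddSubmonoid.subset_closure h2G
    rcases main x hx with h | h
    · exact h
    · exact absurd h hxne
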